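/- Let S be the common feasible set, assumed nonempty, let p* minimize F + W over S and p̄ minimize F over S, where F(p) := ∑_i ∑_k c_i^k (p_i^k)² and W(p) := ∑_i (D_i − ∑_k p_i^k)²/(2a(I−1)). Suppose B ≥ 0 is such that |D_i − ∑_k p_i^k| ≤ B for every i and every p ∈ S. Then the average efficiency gap satisfies (1/I)·(F(p*) − F(p̄)) ≤ B²/(a(I−1)); in particular, with B fixed, the average gap between the sharing equilibrium and the social optimum tends to 0 as the number of prosumers I → ∞. -/
import Mathlib


open Finset

noncomputable section

/-- Common feasible set of the central problem and the social problem: total balance plus line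
flow limits. -/
def FeasSet (I K L : ℕ) (D : Fin I → ℝ) (ptdf : Fin I → Fin L → ℝ) (F : Fin L → ℝ) :
    Set (Fin I → Fin K → ℝ) :=
  {p | (∑ i, ∑ k, p i k = ∑ i, D i) ∧
    ∀ l, |∑ i, ptdf i l * (D i - ∑ k, p i k)| ≤ F l}

/-- Total disutility `F(p) = ∑_i ∑_k c_i^k (p_i^k)^2`. -/
def totalF (I K : ℕ) (c : Fin I → Fin K → ℝ) (p : Fin I → Fin K → ℝ) : ℝ :=
  ∑ i, ∑ k, c i k * p i k ^ 2

/-- Penalty term `W(p) = ∑_i (D_i - ∑_k p_i^k)^2 / (2a(I-1))`. -/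
def totalW (I K : ℕ) (a : ℝ) (D : Fin I → ℝ) (p : Fin I → Fin K → ℝ) : ℝ :=
  ∑ i, (D i - ∑ k, p i k) ^ 2 / (2 * a * ((I : ℝ) - 1))

/-- If every feasible net injection is bounded by `B`, then the average
efficiency gap between the sharing equilibrium `p*` (minimizer of `F + W`) and the social
optimum `p̄` (minimizer of `F`) is at most `B^2 / (a(I-1))`; hence it tends to `0` as
`I → ∞`. -/
theorem stmt_14 (I K L : ℕ) (hI : 2 ≤ I) (hK : 1 ≤ K)
    (a : ℝ) (ha : 0 < a) (c : Fin I → Fin K → ℝ) (hc : ∀ i k, 0 < c i k)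
    (D : Fin I → ℝ) (ptdf : Fin I → Fin L → ℝ) (F : Fin L → ℝ) (hF : ∀ l, 0 ≤ F l)
    (hne : (FeasSet I K L D ptdf F).Nonempty)
    (pstar pbar : Fin I → Fin K → ℝ)
    (hstar : pstar ∈ FeasSet I K L D ptdf F ∧
      ∀ p ∈ FeasSet I K L D ptdf F,
        totalF I K c pstar + totalW I K a D pstar ≤ totalF I K c p + totalW I K a D p)
    (hbar : pbar ∈ FeasSet I K L D ptdf F ∧
      ∀ p ∈ FeasSet I K L D ptdf F, totalF I K c pbar ≤ totalF I K c p)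
    (B : ℝ) (hB : 0 ≤ B)
    (hbound : ∀ p ∈ FeasSet I K L D ptdf F, ∀ i, |D i - ∑ k, p i k| ≤ B) :
    (1 / (I : ℝ)) * (totalF I K c pstar - totalF I K c pbar) ≤
      B ^ 2 / (a * ((I : ℝ) - 1)) := by

  have hI1 : (1:ℝ) ≤ (I:ℝ) - 1 := by
    have : (2:ℝ) ≤ (I:ℝ) := by exact_mod_cast hI
    linarith
  have hIpos : (0:ℝ) < (I:ℝ) := by positivity
  have hden : (0:ℝ) < 2 * a * ((I:ℝ) - 1) := by positivity
  -- W(pstar) ≥ 0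
  have hWstar : 0 ≤ totalW I K a D pstar := by
    apply Finset.sum_nonneg; intro i _; positivity
  -- W(pbar) ≤ I * B^2 / (2a(I-1))
  have hWbar : totalW I K a D pbar ≤ (I:ℝ) * (B ^ 2 / (2 * a * ((I:ℝ) - 1))) := by
    have := Finset.sum_le_card_nsmul Finset.univ
      (fun i => (D i - ∑ k, pbar i k) ^ 2 / (2 * a * ((I:ℝ) - 1)))
      (B ^ 2 / (2 * a * ((I:ℝ) - 1))) ?_
    · simpa [totalW, Finset.card_univ, nsmul_eq_mul] using this
    · intro i _
      have h := hbound pbar hbar.1 i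
      have hsq : (D i - ∑ k, pbar i k) ^ 2 ≤ B ^ 2 := by
        calc (D i - ∑ k, pbar i k) ^ 2 = |D i - ∑ k, pbar i k| ^ 2 := (sq_abs _).symm
          _ ≤ B ^ 2 := by apply pow_le_pow_left₀ (abs_nonneg _) h
      exact div_le_div_of_nonneg_right hsq hden.le
  have key := hstar.2 pbar hbar.1
  have hgap : totalF I K c pstar - totalF I K c pbar ≤ totalW I K a D pbar := by
    linarith
  have h2 : (1 / (I:ℝ)) * (totalF I K c pstar - totalF I K c pbar)
      ≤ (1 / (I:ℝ)) * ((I:ℝ) * (B ^ 2 / (2 * a * ((I:ℝ) - 1)))) := by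
    apply mul_le_mul_of_nonneg_left (hgap.trans hWbar) (by positivity)
  have h3 : (1 / (I:ℝ)) * ((I:ℝ) * (B ^ 2 / (2 * a * ((I:ℝ) - 1))))
      = B ^ 2 / (2 * a * ((I:ℝ) - 1)) := by
    field_simp
  rw [h3] at h2
  refine h2.trans ?_
  rw [div_le_div_iff₀ hden (by positivity)]
  have : 0 ≤ B ^ 2 * (a * ((I:ℝ) - 1)) := by positivity
  nlinarith
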